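/- arXiv:2505.08729 — 2 statements merged into one kernel-verified Lean document; each statement's English description precedes it below -/
import Mathlib

section
/- Let g : Ω → ℝ^{K-1} be a random vector such that for every sign vector s ∈ {-1,+1}^{K-1}, the event {sgn(g) = s componentwise} has positive probability, and such that g has finite moment generating function everywhere. Then the function λ ↦ E[exp(⟨g, λ⟩)] diverges to infinity as ‖λ‖ → ∞. More precisely, there exist ε > 0 and c > 0 such that E[exp(⟨g, λ⟩)] ≥ c·exp(ε‖λ‖₁) for all λ ∈ ℝ^{K-1}. -/
open MeasureTheory Real Filter

/-- If every sign pattern of the coordinates of `g` occurs with positive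
probability and `g` has finite moment generating function everywhere, then
`λ ↦ E[exp ⟨g, λ⟩]` grows at least like `c · exp (ε ‖λ‖₁)`. -/
theorem mgf_lower_bound_of_sign_patterns
    {Ω : Type*} [MeasurableSpace Ω] (P : Measure Ω) [IsProbabilityMeasure P]
    {K : ℕ} (g : Ω → Fin K → ℝ) (hg : Measurable g)
    (hmgf : ∀ l : Fin K → ℝ, Integrable (fun ω => Real.exp (∑ i, g ω i * l i)) P)
    (hsign : ∀ s : Fin K → Bool,
      0 < P {ω | ∀ i, if s i then 0 < g ω i else g ω i < 0}) :
    ∃ ε > 0, ∃ c > 0, ∀ l : Fin K → ℝ,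
      c * Real.exp (ε * ∑ i, |l i|) ≤ ∫ ω, Real.exp (∑ i, g ω i * l i) ∂P := by
  classical
  set B : (Fin K → Bool) → ℝ → Set Ω :=
    fun s ε => {ω | ∀ i, if s i then ε ≤ g ω i else g ω i ≤ -ε} with hB
  have hmeasB : ∀ s ε, MeasurableSet (B s ε) := by
    intro s ε
    have : B s ε = ⋂ i, {ω | if s i then ε ≤ g ω i else g ω i ≤ -ε} := by
      ext ω; simp [hB, Set.mem_iInter]
    rw [this]
    refine MeasurableSet.iInter fun i => ?_
    have hgi : Measurable fun ω => g ω i := (measurable_pi_apply i).comp hg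
    cases h : s i <;> simp only [h, if_true, if_false, Bool.false_eq_true]
    · exact measurableSet_le hgi measurable_const
    · exact measurableSet_le measurable_const hgi
  have hBpos : ∀ s, ∃ n : ℕ, 0 < P (B s (1 / (n + 1))) := by
    intro s
    by_contra h
    push_neg at h
    have h0 : P (⋃ n : ℕ, B s (1 / (n + 1))) = 0 :=
      measure_iUnion_null fun n => le_antisymm (h n) zero_le
    have hsub : {ω | ∀ i, if s i then 0 < g ω i else g ω i < 0} ⊆
        ⋃ n : ℕ, B s (1 / (n + 1)) := by
      intro ω hω
      have hpos : ∀ i, 0 < |g ω i| := by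
        intro i
        have h2 := hω i
        cases h : s i <;> simp [h] at h2
        · exact abs_pos.2 (ne_of_lt h2)
        · exact abs_pos.2 (ne_of_gt h2)
      choose n hn using fun i => exists_nat_one_div_lt (hpos i)
      refine Set.mem_iUnion.2 ⟨Finset.univ.sup n, fun i => ?_⟩
      have hle : (1 : ℝ) / (Finset.univ.sup n + 1) ≤ 1 / (n i + 1) := by
        apply one_div_le_one_div_of_le (by positivity)
        have : n i ≤ Finset.univ.sup n := Finset.le_sup (Finset.mem_univ i)
        exact by exact_mod_cast add_le_add (Nat.cast_le.2 this) (le_refl 1)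
      have h1 := hn i
      have h2 := hω i
      simp only [one_div] at hle h1
      cases h : s i <;> simp only [h, Bool.false_eq_true, if_false, if_true] at h2 ⊢ <;> simp only [one_div]
      · rw [abs_of_neg h2] at h1
        linarith
      · rw [abs_of_pos h2] at h1
        linarith
    exact absurd (measure_mono_null hsub h0) (ne_of_gt (hsign s))
  choose ns hns using hBpos
  set N : ℕ := Finset.univ.sup ns with hN
  set ε : ℝ := 1 / (N + 1) with hε
  have hεpos : 0 < ε := by positivity
  have hBεpos : ∀ s, 0 < P (B s ε) := by
    intro s
    refine lt_of_lt_of_le (hns s) (measure_mono ?_)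
    intro ω hω i
    have hle : ε ≤ 1 / (ns s + 1) := by
      apply one_div_le_one_div_of_le (by positivity)
      have : ns s ≤ N := Finset.le_sup (Finset.mem_univ s)
      exact by exact_mod_cast add_le_add (Nat.cast_le.2 this) (le_refl 1)
    have h2 := hω i
    simp only [one_div] at hle
    cases h : s i <;> simp [h, one_div] at h2 ⊢ <;> linarith
  set c : ℝ := Finset.univ.inf' (Finset.univ_nonempty) fun s => (P (B s ε)).toReal with hc
  have hcpos : 0 < c := by
    rw [hc]
    apply Finset.lt_inf'_iff (α := ℝ) _ |>.2
    intro s _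
    exact ENNReal.toReal_pos (ne_of_gt (hBεpos s)) (measure_ne_top P _)
  refine ⟨ε, hεpos, c, hcpos, fun l => ?_⟩
  set s : Fin K → Bool := fun i => decide (0 ≤ l i) with hs
  have hpt : ∀ ω ∈ B s ε, Real.exp (ε * ∑ i, |l i|) ≤ Real.exp (∑ i, g ω i * l i) := by
    intro ω hω
    apply Real.exp_le_exp.2
    rw [Finset.mul_sum]
    refine Finset.sum_le_sum fun i _ => ?_
    have hωi := hω i
    by_cases h : 0 ≤ l i
    · simp [hs, h] at hωi
      rw [abs_of_nonneg h]
      exact mul_le_mul_of_nonneg_right hωi h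
    · push_neg at h
      simp [hs, not_le.2 h] at hωi
      rw [abs_of_neg h]
      nlinarith
  calc c * Real.exp (ε * ∑ i, |l i|)
      ≤ (P (B s ε)).toReal * Real.exp (ε * ∑ i, |l i|) := by
        apply mul_le_mul_of_nonneg_right _ (Real.exp_nonneg _)
        exact Finset.inf'_le _ (Finset.mem_univ s)
    _ = ∫ _ω in B s ε, Real.exp (ε * ∑ i, |l i|) ∂P := by
        rw [setIntegral_const]; rfl
    _ ≤ ∫ ω in B s ε, Real.exp (∑ i, g ω i * l i) ∂P := by
        refine setIntegral_mono_on (integrableOn_const ?_)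
          (hmgf l).integrableOn (hmeasB s ε) hpt
        exact (lt_of_le_of_lt (measure_mono (Set.subset_univ _)) (by simp [measure_lt_top])).ne
    _ ≤ ∫ ω, Real.exp (∑ i, g ω i * l i) ∂P :=
        setIntegral_le_integral (hmgf l) (Filter.Eventually.of_forall fun ω => (Real.exp_nonneg _))
end

section
/- Suppose w* minimizes the KL divergence D_KL(wP ‖ P) over weight functions w = w(X_{S∩}) subject to the constraints E_P[w(X_{S∩}) τ(X_{S_1})] = ⋯ = E_P[w(X_{S∩}) τ(X_{S_K})], where at least one adjustment set S_j is valid. Then for every k = 1, ..., K, E_P[w*(X_{S∩}) τ(X_{S_k})] = E_{w*P}[Y(1) − Y(0)]. -/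
open MeasureTheory ProbabilityTheory Real

set_option synthInstance.maxHeartbeats 1000000 in
set_option maxHeartbeats 1000000 in
lemma aux_setIntegral {Ω : Type*} {m : MeasurableSpace Ω} [mΩ : MeasurableSpace Ω]
    (μ : Measure Ω) [IsProbabilityMeasure μ]
    {γ : Type*} [MeasurableSpace γ] {g : Ω → γ} (hg : Measurable g)
    (hm : m ≤ mΩ) {T : Set Ω} (hT : MeasurableSet T)
    (hindep : ∀ u : Set γ, MeasurableSet u →
      (μ⟦T ∩ g ⁻¹' u | m⟧) =ᵐ[μ]
        fun ω => (μ⟦T | m⟧) ω * (μ⟦g ⁻¹' u | m⟧) ω)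
    {H : γ → ℝ} (hH : Integrable H (μ.map g)) :
    ∀ s : Set Ω, MeasurableSet[m] s →
      ∫ ω in s ∩ T, H (g ω) ∂μ
        = ∫ ω in s, (μ⟦T | m⟧) ω * (μ[(fun ω' => H (g ω')) | m]) ω ∂μ := by
  have hGmeas : StronglyMeasurable[m] (μ⟦T | m⟧) := stronglyMeasurable_condExp
  have hGbdd : ∀ᵐ ω ∂μ, |(μ⟦T | m⟧) ω| ≤ 1 := by
    have h0 : 0 ≤ᵐ[μ] (μ⟦T | m⟧) :=
      condExp_nonneg (Filter.Eventually.of_forall fun ω => Set.indicator_nonneg (by simp) ω)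
    have h1 : (μ⟦T | m⟧) ≤ᵐ[μ] (μ[(fun _ => (1:ℝ)) | m]) := by
      exact condExp_mono ((integrable_const (1:ℝ)).indicator hT) (integrable_const _)
        (Filter.Eventually.of_forall fun ω => Set.indicator_le_self' (by simp) ω)
    have h2 : (μ[(fun _ => (1:ℝ)) | m]) = fun _ => (1:ℝ) := condExp_const hm 1
    rw [h2] at h1
    filter_upwards [h0, h1] with ω h0 h1
    simp only [Pi.zero_apply] at h0
    rw [abs_le]; exact ⟨by linarith, h1⟩
  refine Integrable.induction (μ := μ.map g)
    (P := fun H => ∀ s : Set Ω, MeasurableSet[m] s →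
      ∫ ω in s ∩ T, H (g ω) ∂μ
        = ∫ ω in s, (μ⟦T | m⟧) ω * (μ[(fun ω' => H (g ω')) | m]) ω ∂μ) ?_ ?_ ?_ ?_ hH
  · intro c u hu hμu s hs
    have hs' := hm s hs
    have ht' : MeasurableSet (g ⁻¹' u) := hg hu
    have hind : Integrable ((T ∩ g ⁻¹' u).indicator fun _ => (1:ℝ)) μ :=
      (integrable_const _).indicator (hT.inter ht')
    have hLHS : ∫ ω in s ∩ T, (u.indicator (fun _ => c)) (g ω) ∂μ
        = (μ (s ∩ T ∩ g ⁻¹' u)).toReal * c := by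
      have h1 : (fun ω => (u.indicator (fun _ => c)) (g ω))
          = (g ⁻¹' u).indicator (fun _ => c) := rfl
      rw [h1, setIntegral_indicator ht', setIntegral_const, smul_eq_mul, measureReal_def]
    have h1 : (fun ω' => (u.indicator (fun _ => c)) (g ω'))
        = c • ((g ⁻¹' u).indicator (fun _ => (1:ℝ))) := by
      funext ω; by_cases h : g ω ∈ u <;> simp [Set.indicator, h]
    have hce : (μ[(fun ω' => (u.indicator (fun _ => c)) (g ω')) | m]) =ᵐ[μ]
        fun ω => c * (μ⟦g ⁻¹' u | m⟧) ω := by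
      rw [h1]
      filter_upwards [condExp_smul (μ := μ) (m := m) c
        ((g ⁻¹' u).indicator (fun _ => (1:ℝ)))] with ω hω
      simpa using hω
    have hcongr : ∀ᵐ ω ∂μ,
        (μ⟦T | m⟧) ω * (μ[(fun ω' => (u.indicator (fun _ => c)) (g ω')) | m]) ω
          = c * (μ⟦T ∩ g ⁻¹' u | m⟧) ω := by
      filter_upwards [hce, hindep u hu] with ω h1 h2
      rw [h1, h2]; ring
    rw [hLHS, setIntegral_congr_ae hs' (hcongr.mono fun ω h _ => h),
      integral_const_mul, setIntegral_condExp hm hind hs,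
      setIntegral_indicator (hT.inter ht'), setIntegral_const, smul_eq_mul, measureReal_def, mul_one,
      Set.inter_assoc, mul_comm]
  · intro H1 H2 hdisj h1 h2 p1 p2 s hs
    have hs' := hm s hs
    have h1' : Integrable (fun ω => H1 (g ω)) μ :=
      (integrable_map_measure h1.aestronglyMeasurable hg.aemeasurable).mp h1
    have h2' : Integrable (fun ω => H2 (g ω)) μ :=
      (integrable_map_measure h2.aestronglyMeasurable hg.aemeasurable).mp h2
    have hGae : AEStronglyMeasurable (μ⟦T | m⟧) μ :=
      (hGmeas.mono hm).aestronglyMeasurable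
    have hGb : ∀ᵐ ω ∂μ, ‖(μ⟦T | m⟧) ω‖ ≤ 1 := by
      filter_upwards [hGbdd] with ω h using by rwa [Real.norm_eq_abs]
    have hint1 : Integrable (fun ω => (μ⟦T | m⟧) ω * (μ[(fun ω' => H1 (g ω')) | m]) ω) μ :=
      Integrable.bdd_mul integrable_condExp hGae hGb
    have hint2 : Integrable (fun ω => (μ⟦T | m⟧) ω * (μ[(fun ω' => H2 (g ω')) | m]) ω) μ :=
      Integrable.bdd_mul integrable_condExp hGae hGb
    have hLHS : ∫ ω in s ∩ T, (H1 + H2) (g ω) ∂μ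
        = ∫ ω in s ∩ T, H1 (g ω) ∂μ + ∫ ω in s ∩ T, H2 (g ω) ∂μ := by
      have : (fun ω => (H1 + H2) (g ω))
          = fun ω => H1 (g ω) + H2 (g ω) := rfl
      rw [this]
      exact integral_add h1'.integrableOn h2'.integrableOn
    have hce : (μ[(fun ω' => (H1 + H2) (g ω')) | m]) =ᵐ[μ]
        fun ω => (μ[(fun ω' => H1 (g ω')) | m]) ω + (μ[(fun ω' => H2 (g ω')) | m]) ω := by
      have heq : (fun ω' => (H1 + H2) (g ω'))
          = (fun ω' => H1 (g ω')) + (fun ω' => H2 (g ω')) := rfl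
      rw [heq]
      exact condExp_add h1' h2' m
    have hcongr : ∀ᵐ ω ∂μ,
        (μ⟦T | m⟧) ω * (μ[(fun ω' => (H1 + H2) (g ω')) | m]) ω
          = (μ⟦T | m⟧) ω * (μ[(fun ω' => H1 (g ω')) | m]) ω
            + (μ⟦T | m⟧) ω * (μ[(fun ω' => H2 (g ω')) | m]) ω := by
      filter_upwards [hce] with ω hω
      rw [hω]; ring
    rw [hLHS, setIntegral_congr_ae hs' (hcongr.mono fun ω h _ => h),
      integral_add hint1.integrableOn hint2.integrableOn, p1 s hs, p2 s hs]
  · -- closedness in L¹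
    refine isSeqClosed_iff_isClosed.mp ?_
    intro Fn F hFn hFlim s hs
    have hs' := hm s hs
    -- generic bound: for u v : L¹(μ.map g), both functionals are `dist u v`-close
    have key : ∀ u v : Lp ℝ 1 (μ.map g),
        |∫ ω in s ∩ T, u (g ω) ∂μ - ∫ ω in s ∩ T, v (g ω) ∂μ| ≤ dist u v ∧
        |∫ ω in s, (μ⟦T | m⟧) ω * (μ[(fun ω' => u (g ω')) | m]) ω ∂μ
          - ∫ ω in s, (μ⟦T | m⟧) ω * (μ[(fun ω' => v (g ω')) | m]) ω ∂μ| ≤ dist u v := by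
      intro u v
      have hu : Integrable (⇑u) (μ.map g) := L1.integrable_coeFn u
      have hv : Integrable (⇑v) (μ.map g) := L1.integrable_coeFn v
      have hu' : Integrable (fun ω => u (g ω)) μ :=
        (integrable_map_measure hu.aestronglyMeasurable hg.aemeasurable).mp hu
      have hv' : Integrable (fun ω => v (g ω)) μ :=
        (integrable_map_measure hv.aestronglyMeasurable hg.aemeasurable).mp hv
      have hGae : AEStronglyMeasurable (μ⟦T | m⟧) μ :=
        (hGmeas.mono hm).aestronglyMeasurable
      have hGb : ∀ᵐ ω ∂μ, ‖(μ⟦T | m⟧) ω‖ ≤ 1 := by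
        filter_upwards [hGbdd] with ω h using by rwa [Real.norm_eq_abs]
      have hdiffint : Integrable (fun ω => u (g ω) - v (g ω)) μ := hu'.sub hv'
      have hdist : dist u v = ∫ ω, |u (g ω) - v (g ω)| ∂μ := by
        rw [L1.dist_eq_integral_dist]
        have hmeas : AEStronglyMeasurable (fun a => dist (u a) (v a)) (μ.map g) :=
          ((hu.aestronglyMeasurable.sub hv.aestronglyMeasurable).norm).congr
            (Filter.Eventually.of_forall fun a => (dist_eq_norm (u a) (v a)).symm)
        rw [integral_map hg.aemeasurable hmeas]
        simp [Real.dist_eq]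
      constructor
      · rw [← integral_sub hu'.integrableOn hv'.integrableOn]
        calc |∫ ω in s ∩ T, (u (g ω) - v (g ω)) ∂μ|
            ≤ ∫ ω in s ∩ T, |u (g ω) - v (g ω)| ∂μ := by
              simpa only [Real.norm_eq_abs] using
                norm_integral_le_integral_norm (μ := μ.restrict (s ∩ T))
                  (fun ω => u (g ω) - v (g ω))
          _ ≤ ∫ ω, |u (g ω) - v (g ω)| ∂μ :=
              setIntegral_le_integral hdiffint.abs
                (Filter.Eventually.of_forall fun ω => abs_nonneg _)
          _ = dist u v := hdist.symm
      · have hint1 : Integrable (fun ω => (μ⟦T | m⟧) ω * (μ[(fun ω' => u (g ω')) | m]) ω) μ :=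
          Integrable.bdd_mul integrable_condExp hGae hGb
        have hint2 : Integrable (fun ω => (μ⟦T | m⟧) ω * (μ[(fun ω' => v (g ω')) | m]) ω) μ :=
          Integrable.bdd_mul integrable_condExp hGae hGb
        rw [← integral_sub hint1.integrableOn hint2.integrableOn]
        have hcesub : (fun ω => (μ[(fun ω' => u (g ω')) | m]) ω - (μ[(fun ω' => v (g ω')) | m]) ω)
            =ᵐ[μ] (μ[(fun ω => u (g ω) - v (g ω)) | m]) := (condExp_sub hu' hv' m).symm
        have hintGD : Integrable (fun ω => (μ⟦T | m⟧) ω * ((μ[(fun ω' => u (g ω')) | m]) ω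
            - (μ[(fun ω' => v (g ω')) | m]) ω)) μ :=
          (hint1.sub hint2).congr (Filter.Eventually.of_forall fun ω => by simp; ring)
        calc |∫ ω in s, ((μ⟦T | m⟧) ω * (μ[(fun ω' => u (g ω')) | m]) ω
                - (μ⟦T | m⟧) ω * (μ[(fun ω' => v (g ω')) | m]) ω) ∂μ|
            = |∫ ω in s, (μ⟦T | m⟧) ω * ((μ[(fun ω' => u (g ω')) | m]) ω
                - (μ[(fun ω' => v (g ω')) | m]) ω) ∂μ| := by
              congr 1
              exact integral_congr_ae (Filter.Eventually.of_forall fun ω => by ring)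
          _ ≤ ∫ ω in s, |(μ⟦T | m⟧) ω * ((μ[(fun ω' => u (g ω')) | m]) ω
                - (μ[(fun ω' => v (g ω')) | m]) ω)| ∂μ := by
              simpa only [Real.norm_eq_abs] using
                norm_integral_le_integral_norm (μ := μ.restrict s)
                  (fun ω => (μ⟦T | m⟧) ω * ((μ[(fun ω' => u (g ω')) | m]) ω
                    - (μ[(fun ω' => v (g ω')) | m]) ω))
          _ ≤ ∫ ω in s, |(μ[(fun ω => u (g ω) - v (g ω)) | m]) ω| ∂μ := by
              refine setIntegral_mono_ae_restrict hintGD.abs.integrableOn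
                integrable_condExp.abs.integrableOn (ae_restrict_of_ae ?_)
              filter_upwards [hGbdd, hcesub] with ω h1 h2
              rw [abs_mul, h2]
              calc |(μ⟦T | m⟧) ω| * |(μ[(fun ω => u (g ω) - v (g ω)) | m]) ω|
                  ≤ 1 * |(μ[(fun ω => u (g ω) - v (g ω)) | m]) ω| :=
                    mul_le_mul_of_nonneg_right h1 (abs_nonneg _)
                _ = _ := one_mul _
          _ ≤ ∫ ω, |(μ[(fun ω => u (g ω) - v (g ω)) | m]) ω| ∂μ :=
              setIntegral_le_integral integrable_condExp.abs
                (Filter.Eventually.of_forall fun ω => abs_nonneg _)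
          _ ≤ ∫ ω, |u (g ω) - v (g ω)| ∂μ := integral_abs_condExp_le _
          _ = dist u v := hdist.symm
    -- pass to the limit
    have hd : Filter.Tendsto (fun n => dist (Fn n) F) Filter.atTop (nhds 0) :=
      tendsto_iff_dist_tendsto_zero.mp hFlim
    have t1 : Filter.Tendsto (fun n => ∫ ω in s ∩ T, (Fn n) (g ω) ∂μ) Filter.atTop
        (nhds (∫ ω in s ∩ T, F (g ω) ∂μ)) := by
      rw [tendsto_iff_dist_tendsto_zero]
      refine squeeze_zero (fun n => dist_nonneg) (fun n => ?_) hd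
      rw [Real.dist_eq]
      exact (key (Fn n) F).1
    have t2 : Filter.Tendsto (fun n =>
        ∫ ω in s, (μ⟦T | m⟧) ω * (μ[(fun ω' => (Fn n) (g ω')) | m]) ω ∂μ) Filter.atTop
        (nhds (∫ ω in s, (μ⟦T | m⟧) ω * (μ[(fun ω' => F (g ω')) | m]) ω ∂μ)) := by
      rw [tendsto_iff_dist_tendsto_zero]
      refine squeeze_zero (fun n => dist_nonneg) (fun n => ?_) hd
      rw [Real.dist_eq]
      exact (key (Fn n) F).2
    have heqn : ∀ n, ∫ ω in s ∩ T, (Fn n) (g ω) ∂μ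
        = ∫ ω in s, (μ⟦T | m⟧) ω * (μ[(fun ω' => (Fn n) (g ω')) | m]) ω ∂μ :=
      fun n => hFn n s hs
    exact tendsto_nhds_unique (t1.congr fun n => heqn n) t2
  · intro H1 H2 heq h1 p1 s hs
    have hcomp : (fun ω => H1 (g ω)) =ᵐ[μ] fun ω => H2 (g ω) :=
      ae_eq_comp hg.aemeasurable heq
    have hLHS : ∫ ω in s ∩ T, H2 (g ω) ∂μ = ∫ ω in s ∩ T, H1 (g ω) ∂μ :=
      integral_congr_ae (ae_restrict_of_ae hcomp.symm)
    have hce : (μ[(fun ω' => H1 (g ω')) | m]) =ᵐ[μ] (μ[(fun ω' => H2 (g ω')) | m]) :=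
      condExp_congr_ae hcomp
    have hcongr : ∀ᵐ ω ∂μ,
        (μ⟦T | m⟧) ω * (μ[(fun ω' => H2 (g ω')) | m]) ω
          = (μ⟦T | m⟧) ω * (μ[(fun ω' => H1 (g ω')) | m]) ω := by
      filter_upwards [hce] with ω hω; rw [hω]
    rw [hLHS, setIntegral_congr_ae (hm s hs) (hcongr.mono fun ω h _ => h)]
    exact p1 s hs

lemma aux_condexp {Ω : Type*} {m : MeasurableSpace Ω} [mΩ : MeasurableSpace Ω]
    (μ : Measure Ω) [IsProbabilityMeasure μ]
    {γ : Type*} [MeasurableSpace γ] {g : Ω → γ} (hg : Measurable g)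
    (hm : m ≤ mΩ) {T : Set Ω} (hT : MeasurableSet T)
    (hindep : ∀ u : Set γ, MeasurableSet u →
      (μ⟦T ∩ g ⁻¹' u | m⟧) =ᵐ[μ]
        fun ω => (μ⟦T | m⟧) ω * (μ⟦g ⁻¹' u | m⟧) ω)
    {H : γ → ℝ} (hH : Integrable H (μ.map g)) :
    (fun ω => (μ⟦T | m⟧) ω * (μ[(fun ω' => H (g ω')) | m]) ω) =ᵐ[μ]
      μ[T.indicator (fun ω => H (g ω)) | m] := by
  have hH' : Integrable (fun ω => H (g ω)) μ :=
    (integrable_map_measure hH.aestronglyMeasurable hg.aemeasurable).mp hH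
  have hGmeas : StronglyMeasurable[m] (μ⟦T | m⟧) := stronglyMeasurable_condExp
  have hGbdd : ∀ᵐ ω ∂μ, |(μ⟦T | m⟧) ω| ≤ 1 := by
    have h0 : 0 ≤ᵐ[μ] (μ⟦T | m⟧) :=
      condExp_nonneg (Filter.Eventually.of_forall fun ω => Set.indicator_nonneg (by simp) ω)
    have h1 : (μ⟦T | m⟧) ≤ᵐ[μ] (μ[(fun _ => (1:ℝ)) | m]) :=
      condExp_mono ((integrable_const (1:ℝ)).indicator hT) (integrable_const _)
        (Filter.Eventually.of_forall fun ω => Set.indicator_le_self' (by simp) ω)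
    have h2 : (μ[(fun _ => (1:ℝ)) | m]) = fun _ => (1:ℝ) := condExp_const hm 1
    rw [h2] at h1
    filter_upwards [h0, h1] with ω h0 h1
    simp only [Pi.zero_apply] at h0
    rw [abs_le]; exact ⟨by linarith, h1⟩
  have hGae : AEStronglyMeasurable (μ⟦T | m⟧) μ := (hGmeas.mono hm).aestronglyMeasurable
  have hGb : ∀ᵐ ω ∂μ, ‖(μ⟦T | m⟧) ω‖ ≤ 1 := by
    filter_upwards [hGbdd] with ω h using by rwa [Real.norm_eq_abs]
  refine ae_eq_condExp_of_forall_setIntegral_eq hm (hH'.indicator hT) ?_ ?_ ?_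
  · intro s hs hμs
    exact (Integrable.bdd_mul integrable_condExp hGae hGb).integrableOn
  · intro s hs hμs
    rw [setIntegral_indicator hT]
    exact (aux_setIntegral μ hg hm hT hindep hH s hs).symm
  · exact (hGmeas.mul stronglyMeasurable_condExp).aestronglyMeasurable
lemma aux_main {Ω : Type*} {m : MeasurableSpace Ω} [mΩ : MeasurableSpace Ω]
    [StandardBorelSpace Ω]
    (P : Measure Ω) [IsProbabilityMeasure P] (hm : m ≤ mΩ)
    (Y0 Y1 A Y : Ω → ℝ) (hY0 : Measurable Y0) (hY1 : Measurable Y1) (hA : Measurable A)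
    (hA01 : ∀ ω, A ω = 0 ∨ A ω = 1)
    (hj : ProbabilityTheory.CondIndepFun m hm A (fun ω => (Y0 ω, Y1 ω)) P)
    (hSUTVA : ∀ ω, Y ω = A ω * Y1 ω + (1 - A ω) * Y0 ω)
    (τj : Ω → ℝ)
    (hτ : τj = fun ω => (P[fun ω' => A ω' * Y ω' | m]) ω / (P[A | m]) ω
      - (P[fun ω' => (1 - A ω') * Y ω' | m]) ω / (P[fun ω' => (1 - A ω') | m]) ω)
    (hoverlap : ∀ᵐ ω ∂P, 0 < (P[A | m]) ω ∧ (P[A | m]) ω < 1)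
    (hY0int : Integrable Y0 P) (hY1int : Integrable Y1 P)
    (w : Ω → ℝ) (hwm : Measurable[m] w)
    (hwYint : Integrable (fun ω => w ω * (Y1 ω - Y0 ω)) P) :
    ∫ ω, w ω * τj ω ∂P = ∫ ω, w ω * (Y1 ω - Y0 ω) ∂P := by
  have hwsm : StronglyMeasurable[m] w := hwm.stronglyMeasurable
  set g : Ω → ℝ × ℝ := fun ω => (Y0 ω, Y1 ω) with hgdef
  have hgmeas : Measurable g := hY0.prodMk hY1
  have hmaster := (ProbabilityTheory.condIndepFun_iff_condExp_inter_preimage_eq_mul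
    (μ := P) (hm' := hm) hA hgmeas).mp hj
  have hT1 : MeasurableSet (A ⁻¹' {1}) := hA (measurableSet_singleton 1)
  have hT0 : MeasurableSet (A ⁻¹' ({1}ᶜ)) := hA (measurableSet_singleton 1).compl
  have hind1 : ∀ u : Set (ℝ × ℝ), MeasurableSet u →
      (P⟦A ⁻¹' {1} ∩ g ⁻¹' u | m⟧) =ᵐ[P]
        fun ω => (P⟦A ⁻¹' {1} | m⟧) ω * (P⟦g ⁻¹' u | m⟧) ω :=
    fun u hu => hmaster {1} u (measurableSet_singleton 1) hu
  have hind0 : ∀ u : Set (ℝ × ℝ), MeasurableSet u →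
      (P⟦A ⁻¹' ({1}ᶜ) ∩ g ⁻¹' u | m⟧) =ᵐ[P]
        fun ω => (P⟦A ⁻¹' ({1}ᶜ) | m⟧) ω * (P⟦g ⁻¹' u | m⟧) ω :=
    fun u hu => hmaster ({1}ᶜ) u (measurableSet_singleton 1).compl hu
  have hsnd : Integrable (Prod.snd : ℝ × ℝ → ℝ) (P.map g) :=
    (integrable_map_measure measurable_snd.aestronglyMeasurable hgmeas.aemeasurable).mpr hY1int
  have hfst : Integrable (Prod.fst : ℝ × ℝ → ℝ) (P.map g) :=
    (integrable_map_measure measurable_fst.aestronglyMeasurable hgmeas.aemeasurable).mpr hY0int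
  have E1 := aux_condexp P hgmeas hm hT1 hind1 hsnd
  have E0 := aux_condexp P hgmeas hm hT0 hind0 hfst
  -- function identities
  have hY1eq : (fun ω' => Prod.snd (g ω')) = Y1 := rfl
  have hY0eq : (fun ω' => Prod.fst (g ω')) = Y0 := rfl
  have hAind : A = (A ⁻¹' {1}).indicator (fun _ => (1:ℝ)) := by
    funext ω; rcases hA01 ω with h | h <;> simp [Set.indicator_apply, h]
  have hAYeq : (A ⁻¹' {1}).indicator (fun ω => Prod.snd (g ω)) = fun ω => A ω * Y ω := by
    funext ω; rcases hA01 ω with h | h <;> simp [Set.indicator_apply, h, hSUTVA ω, hgdef]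
  have h1Aind : (fun ω => 1 - A ω) = (A ⁻¹' ({1}ᶜ)).indicator (fun _ => (1:ℝ)) := by
    funext ω; rcases hA01 ω with h | h <;> simp [Set.indicator_apply, h]
  have h1AYeq : (A ⁻¹' ({1}ᶜ)).indicator (fun ω => Prod.fst (g ω))
      = fun ω => (1 - A ω) * Y ω := by
    funext ω; rcases hA01 ω with h | h <;> simp [Set.indicator_apply, h, hSUTVA ω, hgdef]
  rw [hY1eq, hAYeq] at E1
  rw [hY0eq, h1AYeq] at E0
  rw [← hAind] at E1
  rw [← h1Aind] at E0
  -- conditional expectation of `1 - A`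
  have hAint : Integrable A P := by
    refine (integrable_const (1:ℝ)).mono' hA.aestronglyMeasurable ?_
    filter_upwards with ω
    rcases hA01 ω with h | h <;> simp [h]
  have h1A : P[(fun ω => 1 - A ω) | m] =ᵐ[P] fun ω => 1 - (P[A | m]) ω := by
    have hfn : (fun ω => (1:ℝ) - A ω) = (fun _ => (1:ℝ)) - A := rfl
    rw [hfn]
    filter_upwards [condExp_sub (m := m) (integrable_const (1:ℝ)) hAint] with ω hω
    rw [hω]
    simp [condExp_const hm]
  -- τ j agrees a.e. with the regression contrast
  have hτj : (fun ω => w ω * τj ω)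
      =ᵐ[P] fun ω => w ω * ((P[Y1 | m]) ω - (P[Y0 | m]) ω) := by
    rw [hτ]
    filter_upwards [E1, E0, h1A, hoverlap] with ω e1 e0 h1a hov
    obtain ⟨ha, hb⟩ := hov
    rw [← e1, ← e0, h1a]
    have h1a' : (0:ℝ) < 1 - (P[A | m]) ω := by linarith
    rw [mul_div_cancel_left₀ _ (ne_of_gt ha), mul_div_cancel_left₀ _ (ne_of_gt h1a')]
  -- conclude
  have hZint : Integrable (fun ω => Y1 ω - Y0 ω) P := hY1int.sub hY0int
  have hmul : P[(fun ω => w ω * (Y1 ω - Y0 ω)) | m]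
      =ᵐ[P] fun ω => w ω * (P[(fun ω => Y1 ω - Y0 ω) | m]) ω := by
    have h := condExp_mul_of_stronglyMeasurable_left (μ := P) hwsm hwYint hZint
    filter_upwards [h] with ω hω
    exact hω
  have hsub : P[(fun ω => Y1 ω - Y0 ω) | m] =ᵐ[P] fun ω => (P[Y1 | m]) ω - (P[Y0 | m]) ω := by
    have hfn : (fun ω => Y1 ω - Y0 ω) = Y1 - Y0 := rfl
    rw [hfn]
    filter_upwards [condExp_sub (m := m) hY1int hY0int] with ω hω
    rw [hω]; rfl
  calc ∫ ω, w ω * τj ω ∂P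
      = ∫ ω, w ω * ((P[Y1 | m]) ω - (P[Y0 | m]) ω) ∂P := integral_congr_ae hτj
    _ = ∫ ω, w ω * (P[(fun ω => Y1 ω - Y0 ω) | m]) ω ∂P := by
        refine integral_congr_ae ?_
        filter_upwards [hsub] with ω h
        rw [h]
    _ = ∫ ω, (P[(fun ω => w ω * (Y1 ω - Y0 ω)) | m]) ω ∂P := by
        refine integral_congr_ae ?_
        filter_upwards [hmul] with ω h
        rw [h]
    _ = ∫ ω, w ω * (Y1 ω - Y0 ω) ∂P := integral_condExp hm
/-- If `w*` minimizes the KL divergence `D_KL(wP ‖ P)` over weight functions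
of the common covariates `X_{S∩}` subject to the constraints that all weighted predictive
contrasts agree, and at least one adjustment set is valid, then for every `k`,
`E[w* τ(X_{S_k})] = E_{w*P}[Y1 - Y0]`. -/
theorem reweighted_estimand_is_reweighted_ate
    {Ω : Type*} [mΩ : MeasurableSpace Ω] [StandardBorelSpace Ω] [Nonempty Ω]
    (P : Measure Ω) [IsProbabilityMeasure P]
    {K : ℕ} {α : Fin K → Type*} [∀ k, MeasurableSpace (α k)] {β : Type*} [MeasurableSpace β]
    (XS : ∀ k, Ω → α k) (hXS : ∀ k, Measurable (XS k))
    -- the common covariates `X_{S∩}` are a (measurable) function of each `X_{S_k}`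
    (Xcap : Ω → β) (hXcap : Measurable Xcap)
    (hcoarse : ∀ k, ∃ φ : α k → β, Measurable φ ∧ ∀ ω, Xcap ω = φ (XS k ω))
    (Y0 Y1 A : Ω → ℝ) (hY0 : Measurable Y0) (hY1 : Measurable Y1) (hA : Measurable A)
    (hA01 : ∀ ω, A ω = 0 ∨ A ω = 1)
    (hmle : ∀ k, MeasurableSpace.comap (XS k) inferInstance ≤ mΩ)
    -- at least one adjustment set is valid
    (hvalid : ∃ j, CondIndepFun (MeasurableSpace.comap (XS j) inferInstance) (hmle j)
      A (fun ω => (Y0 ω, Y1 ω)) P)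
    -- SUTVA
    (Y : Ω → ℝ) (hSUTVA : ∀ ω, Y ω = A ω * Y1 ω + (1 - A ω) * Y0 ω)
    -- the predictive contrasts `τ(X_{S_k})`
    (τ : Fin K → Ω → ℝ)
    (hτ : ∀ k, τ k = fun ω =>
      (P[fun ω' => A ω' * Y ω' | MeasurableSpace.comap (XS k) inferInstance]) ω
        / (P[A | MeasurableSpace.comap (XS k) inferInstance]) ω
      - (P[fun ω' => (1 - A ω') * Y ω' | MeasurableSpace.comap (XS k) inferInstance]) ω
        / (P[fun ω' => (1 - A ω') | MeasurableSpace.comap (XS k) inferInstance]) ω)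
    -- strict overlap for each adjustment set
    (hoverlap : ∀ k, ∀ᵐ ω ∂P,
      0 < (P[A | MeasurableSpace.comap (XS k) inferInstance]) ω ∧
        (P[A | MeasurableSpace.comap (XS k) inferInstance]) ω < 1)
    -- integrability
    (hY0int : Integrable Y0 P) (hY1int : Integrable Y1 P) (hYint : Integrable Y P)
    -- `w*`: a weight function of `X_{S∩}`
    (wstar : Ω → ℝ)
    (hwmeas : Measurable[MeasurableSpace.comap Xcap inferInstance] wstar)
    (hwpos : ∀ ω, 0 ≤ wstar ω) (hwmean : ∫ ω, wstar ω ∂P = 1)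
    (hwτint : ∀ k, Integrable (fun ω => wstar ω * τ k ω) P)
    (hwYint : Integrable (fun ω => wstar ω * (Y1 ω - Y0 ω)) P)
    -- feasibility: all constrained expectations agree
    (hfeas : ∀ k k', ∫ ω, wstar ω * τ k ω ∂P = ∫ ω, wstar ω * τ k' ω ∂P)
    -- KL optimality of `w*` among all feasible weight functions of `X_{S∩}`
    (hopt : ∀ w : Ω → ℝ,
      Measurable[MeasurableSpace.comap Xcap inferInstance] w →
      (∀ ω, 0 ≤ w ω) → (∫ ω, w ω ∂P = 1) →
      Integrable (fun ω => w ω * Real.log (w ω)) P →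
      (∀ k, Integrable (fun ω => w ω * τ k ω) P) →
      (∀ k k', ∫ ω, w ω * τ k ω ∂P = ∫ ω, w ω * τ k' ω ∂P) →
      ∫ ω, wstar ω * Real.log (wstar ω) ∂P ≤ ∫ ω, w ω * Real.log (w ω) ∂P) :
    ∀ k, ∫ ω, wstar ω * τ k ω ∂P = ∫ ω, wstar ω * (Y1 ω - Y0 ω) ∂P := by
  obtain ⟨j, hj⟩ := hvalid
  intro k
  obtain ⟨φ, hφ, hfac⟩ := hcoarse j
  have hle : MeasurableSpace.comap Xcap inferInstance
      ≤ MeasurableSpace.comap (XS j) inferInstance := by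
    have hXeq : Xcap = φ ∘ XS j := funext hfac
    rw [hXeq, ← MeasurableSpace.comap_comp]
    exact MeasurableSpace.comap_mono hφ.comap_le
  have hwm : Measurable[MeasurableSpace.comap (XS j) inferInstance] wstar :=
    hwmeas.mono hle le_rfl
  rw [hfeas k j]
  exact aux_main P (hmle j) Y0 Y1 A Y hY0 hY1 hA hA01 hj hSUTVA (τ j) (hτ j) (hoverlap j)
    hY0int hY1int wstar hwm hwYint
end
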